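/- To any invertible solution of the pentagon relation one associates a pair of mutually dual bialgebras: the structure constants m_{αβ}^γ := tr(G_α G_β G^γ) and μ^{αβ}_γ := tr(F^α F^β F_γ) satisfy the bialgebra compatibility condition, namely for all α, β, ρ, σ ∈ ι: Σ_γ m_{αβ}^γ · μ^{ρσ}_γ = Σ_{ρ₁,σ₁,ρ₂,σ₂} μ^{ρ₁σ₁}_α · μ^{ρ₂σ₂}_β · m_{ρ₁ρ₂}^ρ · m_{σ₁σ₂}^σ. -/

import Mathlib

open Matrix BigOperators

/-- Matrix on `V × V × V` acting as `T` on the first and second factors. -/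
def lift12 {k V : Type*} [Semiring k] [DecidableEq V]
    (T : Matrix (V × V) (V × V) k) : Matrix (V × V × V) (V × V × V) k :=
  Matrix.of fun p q =>
    T (p.1, p.2.1) (q.1, q.2.1) * (if p.2.2 = q.2.2 then 1 else 0)

/-- Matrix on `V × V × V` acting as `T` on the first and third factors. -/
def lift13 {k V : Type*} [Semiring k] [DecidableEq V]
    (T : Matrix (V × V) (V × V) k) : Matrix (V × V × V) (V × V × V) k :=
  Matrix.of fun p q =>
    T (p.1, p.2.2) (q.1, q.2.2) * (if p.2.1 = q.2.1 then 1 else 0)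

/-- Matrix on `V × V × V` acting as `T` on the second and third factors. -/
def lift23 {k V : Type*} [Semiring k] [DecidableEq V]
    (T : Matrix (V × V) (V × V) k) : Matrix (V × V × V) (V × V × V) k :=
  Matrix.of fun p q =>
    T (p.2.1, p.2.2) (q.2.1, q.2.2) * (if p.1 = q.1 then 1 else 0)

section Kit

variable {M : Type*} [AddCommMonoid M]
variable {A B C D E X Y Z W U : Type*} [Fintype A] [Fintype B] [Fintype C] [Fintype D]
  [Fintype E] [Fintype X] [Fintype Y] [Fintype Z] [Fintype W] [Fintype U]

lemma fuse3 (f : A → B → C → M) :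
    ∑ a, ∑ b, ∑ c, f a b c = ∑ p : A × B × C, f p.1 p.2.1 p.2.2 := by
  simp only [Fintype.sum_prod_type]

lemma fuse5 (f : A → B → C → D → E → M) :
    ∑ a, ∑ b, ∑ c, ∑ d, ∑ e, f a b c d e
      = ∑ p : A × B × C × D × E, f p.1 p.2.1 p.2.2.1 p.2.2.2.1 p.2.2.2.2 := by
  simp only [Fintype.sum_prod_type]

lemma fuse6 (f : A → B → C → D → E → X → M) :
    ∑ a, ∑ b, ∑ c, ∑ d, ∑ e, ∑ x, f a b c d e x
      = ∑ p : A × B × C × D × E × X,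
          f p.1 p.2.1 p.2.2.1 p.2.2.2.1 p.2.2.2.2.1 p.2.2.2.2.2 := by
  simp only [Fintype.sum_prod_type]

lemma fuse8 (f : A → B → C → D → E → X → Y → Z → M) :
    ∑ a, ∑ b, ∑ c, ∑ d, ∑ e, ∑ x, ∑ y, ∑ z, f a b c d e x y z
      = ∑ p : A × B × C × D × E × X × Y × Z,
          f p.1 p.2.1 p.2.2.1 p.2.2.2.1 p.2.2.2.2.1 p.2.2.2.2.2.1 p.2.2.2.2.2.2.1
            p.2.2.2.2.2.2.2 := by
  simp only [Fintype.sum_prod_type]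

lemma fuse10 (f : A → B → C → D → E → X → Y → Z → W → U → M) :
    ∑ a, ∑ b, ∑ c, ∑ d, ∑ e, ∑ x, ∑ y, ∑ z, ∑ w, ∑ u, f a b c d e x y z w u
      = ∑ p : A × B × C × D × E × X × Y × Z × W × U,
          f p.1 p.2.1 p.2.2.1 p.2.2.2.1 p.2.2.2.2.1 p.2.2.2.2.2.1 p.2.2.2.2.2.2.1
            p.2.2.2.2.2.2.2.1 p.2.2.2.2.2.2.2.2.1 p.2.2.2.2.2.2.2.2.2 := by
  simp only [Fintype.sum_prod_type]

end Kit

section Shuffles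

variable {k : Type*} [CommRing k]
variable {V ι : Type*} [Fintype V] [Fintype ι]

lemma shuffleA (P Q : V → V → V → k) (A B : V → V → k) :
    ∑ x, (∑ b, ∑ e, P x b e * A e b) * (∑ c, ∑ f, Q x c f * B f c)
      = ∑ b, ∑ c, ∑ e, ∑ f, (∑ x, P x b e * Q x c f) * (A e b * B f c) := by
  simp only [Finset.sum_mul, Finset.mul_sum]
  rw [fuse5, fuse5]
  refine Fintype.sum_equiv
    ⟨fun t => (t.2.2.2.1, t.2.1, t.2.2.2.2, t.2.2.1, t.1),
     fun s => (s.2.2.2.2, s.2.1, s.2.2.2.1, s.1, s.2.2.1),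
     fun t => rfl, fun s => rfl⟩ _ _ ?_
  rintro ⟨x, b, e, c, f⟩
  simp only [Equiv.coe_fn_mk]
  ring

lemma sum_pull [Fintype A] [Fintype B] (c : ι → k) (f : ι → A → B → k) (g : A → B → k) :
    ∑ a, ∑ b, (∑ i, c i * f i a b) * g a b
      = ∑ i, c i * (∑ a, ∑ b, f i a b * g a b) := by
  simp only [Finset.sum_mul, Finset.mul_sum]
  rw [fuse3, fuse3]
  refine Fintype.sum_equiv
    ⟨fun t => (t.2.2, t.1, t.2.1), fun s => (s.2.1, s.2.2, s.1),
     fun t => rfl, fun s => rfl⟩ _ _ ?_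
  rintro ⟨a, b, i⟩
  simp only [Equiv.coe_fn_mk]
  ring

lemma shuffleB (Sf : V → V → V → V → k) (Ff : ι → V → V → k) (Tf : V → V → V → V → k)
    (A B : V → V → k) (Gc : ι → k) :
    ∑ b, ∑ c, ∑ e, ∑ f,
        (∑ y, ∑ q, ∑ p, Sf b c p q * (∑ τ, Gc τ * Ff τ p y) * Tf y q e f) * (A e b * B f c)
      = ∑ τ, (∑ p, ∑ q, ∑ y, ∑ b, ∑ c, ∑ e, ∑ f,
          Sf b c p q * Ff τ p y * Tf y q e f * (A e b * B f c)) * Gc τ := by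
  simp only [Finset.sum_mul, Finset.mul_sum]
  rw [fuse8, fuse8]
  refine Fintype.sum_equiv
    ⟨fun t => (t.2.2.2.2.2.2.2, t.2.2.2.2.2.2.1, t.2.2.2.2.2.1, t.2.2.2.2.1, t.1, t.2.1,
        t.2.2.1, t.2.2.2.1),
     fun s => (s.2.2.2.2.1, s.2.2.2.2.2.1, s.2.2.2.2.2.2.1, s.2.2.2.2.2.2.2, s.2.2.2.1,
        s.2.2.1, s.2.1, s.1),
     fun t => rfl, fun s => rfl⟩ _ _ ?_
  rintro ⟨b, c, e, f, y, q, p, τ⟩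
  simp only [Equiv.coe_fn_mk]
  ring

lemma shuffleD (Fa Fb : ι → V → V → k) (A : V → V → k) (Ga Gb : ι → k) :
    ∑ c, ∑ f, (∑ z, (∑ u, Ga u * Fa u c z) * (∑ v, Gb v * Fb v z f)) * A f c
      = ∑ u, ∑ v, (∑ x, ∑ y, ∑ z, Fa u x z * Fb v z y * A y x) * (Ga u * Gb v) := by
  simp only [Finset.sum_mul, Finset.mul_sum]
  rw [fuse5, fuse5]
  refine Fintype.sum_equiv
    ⟨fun t => (t.2.2.2.2, t.2.2.2.1, t.1, t.2.1, t.2.2.1),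
     fun s => (s.2.2.1, s.2.2.2.1, s.2.2.2.2, s.2.1, s.1),
     fun t => rfl, fun s => rfl⟩ _ _ ?_
  rintro ⟨c, f, z, v, u⟩
  simp only [Equiv.coe_fn_mk]
  ring

lemma shuffleE (Tf : V → V → k) (S1f : V → V → V → V → k) (S2f : V → V → k) (A : V → V → k) :
    ∑ c, ∑ f, (∑ x, ∑ y, ∑ p, Tf x y * (S1f y c p f * S2f x p)) * A f c
      = ∑ x, ∑ y, ∑ p, Tf x y * ((∑ c, ∑ f, S1f y c p f * A f c) * S2f x p) := by
  simp only [Finset.sum_mul, Finset.mul_sum]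
  rw [fuse5, fuse5]
  refine Fintype.sum_equiv
    ⟨fun t => (t.2.2.1, t.2.2.2.1, t.2.2.2.2, t.1, t.2.1),
     fun s => (s.2.2.2.1, s.2.2.2.2, s.1, s.2.1, s.2.2.1),
     fun t => rfl, fun s => rfl⟩ _ _ ?_
  rintro ⟨c, f, x, y, p⟩
  simp only [Equiv.coe_fn_mk]
  ring

lemma shuffleF (tF : ι → ι → k) (Gm : ι → V → V → k) (P Q : V → V → k) :
    ∑ p1, ∑ p2, ∑ q1, ∑ q2,
        (∑ u, ∑ v, tF u v * (Gm u p1 q1 * Gm v p2 q2)) * (P q1 p1 * Q q2 p2)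
      = ∑ u, ∑ v, tF u v * ((∑ x, ∑ y, Gm u x y * P y x) * (∑ x, ∑ y, Gm v x y * Q y x)) := by
  simp only [Finset.sum_mul, Finset.mul_sum]
  rw [fuse6, fuse6]
  refine Fintype.sum_equiv
    ⟨fun t => (t.2.2.2.2.1, t.2.2.2.2.2, t.2.1, t.2.2.2.1, t.1, t.2.2.1),
     fun s => (s.2.2.2.2.1, s.2.2.1, s.2.2.2.2.2, s.2.2.2.1, s.1, s.2.1),
     fun t => rfl, fun s => rfl⟩ _ _ ?_
  rintro ⟨p1, p2, q1, q2, u, v⟩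
  simp only [Equiv.coe_fn_mk]
  ring

lemma stepA_aux (tA tB : ι → ι → k) (Gm : ι → V → V → k) (P Q : V → V → k) :
    ∑ p1, ∑ p2, ∑ q1, ∑ q2,
        (∑ w1, ∑ w2, (∑ u, ∑ v, tA u v * (Gm u p1 w1 * Gm v p2 w2)) *
          (∑ u, ∑ v, tB u v * (Gm u w1 q1 * Gm v w2 q2))) * (P q1 p1 * Q q2 p2)
      = ∑ r1, ∑ s1, ∑ r2, ∑ s2, tA r1 s1 * tB r2 s2 *
          (∑ x, ∑ y, ∑ z, Gm r1 x z * Gm r2 z y * P y x) *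
          (∑ x, ∑ y, ∑ z, Gm s1 x z * Gm s2 z y * Q y x) := by
  simp only [Finset.sum_mul, Finset.mul_sum]
  rw [fuse10, fuse10]
  refine Fintype.sum_equiv
    ⟨fun t => (t.2.2.2.2.2.2.2.2.1, t.2.2.2.2.2.2.2.2.2, t.2.2.2.2.2.2.1, t.2.2.2.2.2.2.2.1,
        t.2.1, t.2.2.2.1, t.2.2.2.2.2.1, t.1, t.2.2.1, t.2.2.2.2.1),
     fun s => (s.2.2.2.2.2.2.2.1, s.2.2.2.2.1, s.2.2.2.2.2.2.2.2.1, s.2.2.2.2.2.1,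
        s.2.2.2.2.2.2.2.2.2, s.2.2.2.2.2.2.1, s.2.2.1, s.2.2.2.1, s.1, s.2.1),
     fun t => rfl, fun s => rfl⟩ _ _ ?_
  rintro ⟨p1, p2, q1, q2, w1, w2, u1, v1, u2, v2⟩
  simp only [Equiv.coe_fn_mk]
  ring

end Shuffles

section Entries

variable {k V ι : Type*} [CommRing k] [Fintype V] [DecidableEq V] [Fintype ι]
set_option linter.unusedSectionVars false

lemma lift12_mul (A B : Matrix (V × V) (V × V) k) :
    lift12 A * lift12 B = lift12 (A * B) := by
  ext ⟨a, b, c⟩ ⟨d, e, f⟩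
  simp [lift12, Matrix.mul_apply, Fintype.sum_prod_type, mul_ite, ite_mul,
    mul_zero, zero_mul, mul_one, one_mul, Finset.sum_ite_eq, Finset.sum_ite_eq']

lemma lift12_one : lift12 (1 : Matrix (V × V) (V × V) k) = 1 := by
  ext ⟨a, b, c⟩ ⟨d, e, f⟩
  simp only [lift12, Matrix.of_apply, Matrix.one_apply, Prod.ext_iff, ite_and]
  split_ifs <;> simp_all

lemma lift23_mul (A B : Matrix (V × V) (V × V) k) :
    lift23 A * lift23 B = lift23 (A * B) := by
  ext ⟨a, b, c⟩ ⟨d, e, f⟩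
  simp [lift23, Matrix.mul_apply, Fintype.sum_prod_type, mul_ite, ite_mul,
    mul_zero, zero_mul, mul_one, one_mul, Finset.sum_ite_eq, Finset.sum_ite_eq']

lemma lift23_one : lift23 (1 : Matrix (V × V) (V × V) k) = 1 := by
  ext ⟨a, b, c⟩ ⟨d, e, f⟩
  simp only [lift23, Matrix.of_apply, Matrix.one_apply, Prod.ext_iff, ite_and]
  split_ifs <;> simp_all

lemma ent1 (A B : Matrix (V × V) (V × V) k) (a b c d e f : V) :
    (lift12 A * lift13 B) (a,b,c) (d,e,f) = ∑ x, A (a,b) (x,e) * B (x,c) (d,f) := by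
  simp [lift12, lift13, Matrix.mul_apply, Fintype.sum_prod_type, mul_ite, ite_mul,
    mul_zero, zero_mul, mul_one, one_mul, Finset.sum_ite_eq, Finset.sum_ite_eq']

lemma ent2 (A B C : Matrix (V × V) (V × V) k) (a b c d e f : V) :
    (lift23 A * lift12 B * lift23 C) (a,b,c) (d,e,f)
      = ∑ y, ∑ q, ∑ p, A (b,c) (p,q) * B (a,p) (d,y) * C (y,q) (e,f) := by
  simp [lift12, lift23, Matrix.mul_apply, Fintype.sum_prod_type, mul_ite, ite_mul,
    mul_zero, zero_mul, mul_one, one_mul, Finset.sum_ite_eq, Finset.sum_ite_eq',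
    Finset.sum_mul]

lemma ent3 (A B : Matrix (V × V) (V × V) k) (a b c d e f : V) :
    (lift13 A * lift23 B) (a,b,c) (d,e,f) = ∑ z, A (a,c) (d,z) * B (b,z) (e,f) := by
  simp [lift13, lift23, Matrix.mul_apply, Fintype.sum_prod_type, mul_ite, ite_mul,
    mul_zero, zero_mul, mul_one, one_mul, Finset.sum_ite_eq, Finset.sum_ite_eq']

lemma ent4 (A B C : Matrix (V × V) (V × V) k) (a b c d e f : V) :
    (lift12 A * (lift23 B * lift12 C)) (a,b,c) (d,e,f)
      = ∑ x, ∑ y, ∑ p, A (a,b) (x,y) * (B (y,c) (p,f) * C (x,p) (d,e)) := by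
  simp [lift12, lift23, Matrix.mul_apply, Fintype.sum_prod_type, mul_ite, ite_mul,
    mul_zero, zero_mul, mul_one, one_mul, Finset.sum_ite_eq, Finset.sum_ite_eq',
    Finset.sum_mul, Finset.mul_sum]

lemma tr2 (A B : Matrix V V k) : (A * B).trace = ∑ x, ∑ y, A x y * B y x := by
  simp [Matrix.trace, Matrix.diag, Matrix.mul_apply, Finset.sum_mul]

lemma tr3 (A B C : Matrix V V k) :
    (A * B * C).trace = ∑ x, ∑ y, ∑ z, A x z * B z y * C y x := by
  simp [Matrix.trace, Matrix.diag, Matrix.mul_apply, Finset.sum_mul]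

/-- the coproduct-like matrix on `V × V`. -/
def Dmat (F Fd G : ι → Matrix V V k) (ω : ι) : Matrix (V × V) (V × V) k :=
  Matrix.of fun p q => ∑ u, ∑ v, (F u * F v * Fd ω).trace * (G u p.1 q.1 * G v p.2 q.2)

/-- `1 ⊗ X` on `V × V`. -/
def MGmat (X : Matrix V V k) : Matrix (V × V) (V × V) k :=
  Matrix.of fun p q => (if p.1 = q.1 then (1 : k) else 0) * X p.2 q.2

lemma MGmat_mul (X Y : Matrix V V k) :
    MGmat X * MGmat Y = MGmat (X * Y) := by
  ext ⟨a, b⟩ ⟨d, e⟩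
  simp [MGmat, Matrix.mul_apply, Fintype.sum_prod_type, mul_ite, ite_mul,
    mul_zero, zero_mul, mul_one, one_mul, Finset.sum_ite_eq, Finset.sum_ite_eq',
    Finset.mul_sum]

lemma MGmat_sum (c : ι → k) (H : ι → Matrix V V k) :
    MGmat (∑ γ, c γ • H γ) = ∑ γ, c γ • MGmat (H γ) := by
  ext ⟨a, b⟩ ⟨d, e⟩
  simp only [MGmat, Matrix.of_apply, Matrix.sum_apply, Matrix.smul_apply, smul_eq_mul,
    Finset.mul_sum]
  exact Finset.sum_congr rfl fun γ _ => by ring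

lemma ent5 (Tm S : Matrix (V × V) (V × V) k) (X : Matrix V V k) (a b d e : V) :
    (Tm * (MGmat X * S)) (a,b) (d,e)
      = ∑ x, ∑ y, ∑ p, Tm (a,b) (x,y) * (X y p * S (x,p) (d,e)) := by
  simp [MGmat, Matrix.mul_apply, Fintype.sum_prod_type, mul_ite, ite_mul,
    mul_zero, zero_mul, mul_one, one_mul, Finset.sum_ite_eq, Finset.sum_ite_eq',
    Finset.mul_sum]

end Entries

theorem pentagon_bialgebra_compatibility
    {k V ι : Type*} [Field k] [Fintype V] [DecidableEq V] [Fintype ι] [DecidableEq ι]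
    (S : Matrix (V × V) (V × V) k)
    (hSinv : IsUnit S)
    (hpent : lift12 S * lift13 S * lift23 S = lift23 S * lift12 S)
    (G F Gd Fd : ι → Matrix V V k)
    (hdecomp : ∀ a b c d, S (a, b) (c, d) = ∑ α, G α a c * F α b d)
    (hFdual : ∀ α β, (Fd α * F β).trace = if α = β then (1 : k) else 0)
    (hGdual : ∀ α β, (G α * Gd β).trace = if α = β then (1 : k) else 0) :
    ∀ α β ρ σ, ∑ γ, (G α * G β * Gd γ).trace * (F ρ * F σ * Fd γ).trace = ∑ ρ₁, ∑ σ₁, ∑ ρ₂, ∑ σ₂, (F ρ₁ * F σ₁ * Fd α).trace * (F ρ₂ * F σ₂ * Fd β).trace * (G ρ₁ * G ρ₂ * Gd ρ).trace * (G σ₁ * G σ₂ * Gd σ).trace := by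
  classical
  obtain ⟨uS, huS⟩ := hSinv
  set T : Matrix (V × V) (V × V) k := (↑uS⁻¹ : Matrix (V × V) (V × V) k) with hTdef
  have hST : S * T = 1 := by rw [← huS]; exact uS.mul_inv
  have hTS : T * S = 1 := by rw [← huS]; exact uS.inv_mul
  -- rearranged pentagon equations
  have h1 : lift12 S * lift13 S = lift23 S * lift12 S * lift23 T := by
    have h := congrArg (· * lift23 T) hpent
    rw [mul_assoc, lift23_mul, hST, lift23_one, mul_one] at h
    exact h
  have h2 : lift13 S * lift23 S = lift12 T * (lift23 S * lift12 S) := by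
    have h := congrArg (lift12 T * ·) hpent
    rw [show lift12 S * lift13 S * lift23 S = lift12 S * (lift13 S * lift23 S) from
        mul_assoc _ _ _, ← mul_assoc (lift12 T), lift12_mul, hTS, lift12_one, one_mul] at h
    exact h
  -- component forms of the dualities
  have hFd' : ∀ (τ u : ι), (∑ b, ∑ e, F u b e * Fd τ e b) = if τ = u then (1 : k) else 0 := by
    intro τ u
    have h := hFdual τ u
    rw [Matrix.trace_mul_comm, tr2] at h
    exact h
  have hGd' : ∀ (u τ : ι), (∑ x, ∑ y, G u x y * Gd τ y x) = if u = τ then (1 : k) else 0 := by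
    intro u τ
    have h := hGdual u τ
    rw [tr2] at h
    exact h
  -- contraction of S against Fd yields G
  have hSFd : ∀ (τ : ι) (a x : V), (∑ b, ∑ e, S (a, b) (x, e) * Fd τ e b) = G τ a x := by
    intro τ a x
    simp only [hdecomp]
    rw [sum_pull (c := fun α => G α a x) (f := fun α b e => F α b e) (g := fun b e => Fd τ e b)]
    simp only [hFd']
    simp [mul_ite, mul_one, mul_zero, Finset.sum_ite_eq]
  -- multiplicativity of the G family
  have hM : ∀ α' β', G α' * G β' = ∑ γ, (G α' * G β' * Gd γ).trace • G γ := by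
    intro α' β'
    set cc : ι → k := fun τ => ∑ p, ∑ q, ∑ y, ∑ b, ∑ c, ∑ e, ∑ f,
      S (b,c) (p,q) * F τ p y * T (y,q) (e,f) * (Fd α' e b * Fd β' f c) with hccdef
    have hceq : ∀ a d, (G α' * G β') a d = ∑ τ, cc τ * G τ a d := by
      intro a d
      have hLeft : ∑ b, ∑ c, ∑ e, ∑ f,
          (lift12 S * lift13 S) (a,b,c) (d,e,f) * (Fd α' e b * Fd β' f c)
            = (G α' * G β') a d := by
        simp only [ent1]
        rw [← shuffleA (fun x b e => S (a,b) (x,e)) (fun x c f => S (x,c) (d,f))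
          (fun e b => Fd α' e b) (fun f c => Fd β' f c)]
        simp only [hSFd]
        rw [Matrix.mul_apply]
      have hRight : ∑ b, ∑ c, ∑ e, ∑ f,
          (lift23 S * lift12 S * lift23 T) (a,b,c) (d,e,f) * (Fd α' e b * Fd β' f c)
            = ∑ τ, cc τ * G τ a d := by
        simp only [ent2]
        simp only [hdecomp a]
        exact shuffleB (fun b c p q => S (b,c) (p,q)) (fun τ p y => F τ p y)
          (fun y q e f => T (y,q) (e,f)) (fun e b => Fd α' e b) (fun f c => Fd β' f c)
          (fun τ => G τ a d)
      calc (G α' * G β') a d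
          = ∑ b, ∑ c, ∑ e, ∑ f,
              (lift12 S * lift13 S) (a,b,c) (d,e,f) * (Fd α' e b * Fd β' f c) := hLeft.symm
        _ = ∑ b, ∑ c, ∑ e, ∑ f,
              (lift23 S * lift12 S * lift23 T) (a,b,c) (d,e,f) * (Fd α' e b * Fd β' f c) := by
              rw [h1]
        _ = ∑ τ, cc τ * G τ a d := hRight
    have hmc : ∀ γ, (G α' * G β' * Gd γ).trace = cc γ := by
      intro γ
      rw [tr2]
      simp only [hceq]
      rw [sum_pull (c := cc) (f := fun τ x y => G τ x y) (g := fun x y => Gd γ y x)]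
      simp only [hGd']
      simp [mul_ite, mul_one, mul_zero, Finset.sum_ite_eq']
    ext a d
    rw [Matrix.sum_apply]
    simp only [Matrix.smul_apply, smul_eq_mul, hmc]
    exact hceq a d
  -- the coproduct identity : Dmat ω = T * (1 ⊗ G ω) * S
  have hL2 : ∀ ω, Dmat F Fd G ω = T * (MGmat (G ω) * S) := by
    intro ω
    ext ⟨a, b⟩ ⟨d, e⟩
    have hLeft2 : ∑ c, ∑ f, (lift13 S * lift23 S) (a,b,c) (d,e,f) * Fd ω f c
        = Dmat F Fd G ω (a,b) (d,e) := by
      simp only [ent3, hdecomp]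
      simp only [Dmat, Matrix.of_apply, tr3]
      exact shuffleD (fun u x z => F u x z) (fun v z y => F v z y) (fun y x => Fd ω y x)
        (fun u => G u a d) (fun v => G v b e)
    have hRight2 : ∑ c, ∑ f,
        (lift12 T * (lift23 S * lift12 S)) (a,b,c) (d,e,f) * Fd ω f c
          = (T * (MGmat (G ω) * S)) (a,b) (d,e) := by
      simp only [ent4]
      rw [shuffleE (fun x y => T (a,b) (x,y)) (fun y c p f => S (y,c) (p,f))
        (fun x p => S (x,p) (d,e)) (fun f c => Fd ω f c)]
      simp only [hSFd]
      rw [ent5]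
    calc Dmat F Fd G ω (a,b) (d,e)
        = ∑ c, ∑ f, (lift13 S * lift23 S) (a,b,c) (d,e,f) * Fd ω f c := hLeft2.symm
      _ = ∑ c, ∑ f, (lift12 T * (lift23 S * lift12 S)) (a,b,c) (d,e,f) * Fd ω f c := by
            rw [h2]
      _ = (T * (MGmat (G ω) * S)) (a,b) (d,e) := hRight2
  -- multiplicativity of D
  have hSTX : ∀ X : Matrix (V × V) (V × V) k, S * (T * X) = X := by
    intro X
    rw [← mul_assoc, hST, one_mul]
  have hDmul : ∀ α' β', Dmat F Fd G α' * Dmat F Fd G β'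
      = ∑ γ, (G α' * G β' * Gd γ).trace • Dmat F Fd G γ := by
    intro α' β'
    rw [hL2 α', hL2 β']
    calc T * (MGmat (G α') * S) * (T * (MGmat (G β') * S))
        = T * (MGmat (G α') * (S * (T * (MGmat (G β') * S)))) := by
          simp only [mul_assoc]
      _ = T * (MGmat (G α') * (MGmat (G β') * S)) := by rw [hSTX]
      _ = T * (MGmat (G α' * G β') * S) := by
          rw [← mul_assoc (MGmat (G α')) (MGmat (G β')) S, MGmat_mul]
      _ = T * (MGmat (∑ γ, (G α' * G β' * Gd γ).trace • G γ) * S) := by rw [← hM α' β']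
      _ = ∑ γ, (G α' * G β' * Gd γ).trace • Dmat F Fd G γ := by
          rw [MGmat_sum]
          simp only [Matrix.sum_mul, Matrix.mul_sum, Matrix.smul_mul, Matrix.mul_smul]
          exact Finset.sum_congr rfl fun γ _ => by rw [← hL2 γ]
  -- final assembly
  intro α β ρ σ
  have final1 : ∀ γ, (∑ p : V × V, ∑ q : V × V,
      Dmat F Fd G γ p q * (Gd ρ q.1 p.1 * Gd σ q.2 p.2)) = (F ρ * F σ * Fd γ).trace := by
    intro γ
    simp only [Dmat, Matrix.of_apply, Fintype.sum_prod_type]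
    rw [shuffleF (tF := fun u v => (F u * F v * Fd γ).trace) (Gm := fun u x y => G u x y)
      (P := fun q p => Gd ρ q p) (Q := fun q p => Gd σ q p)]
    simp only [hGd']
    simp [mul_ite, ite_mul, mul_one, mul_zero, zero_mul, one_mul,
      Finset.sum_ite_eq, Finset.sum_ite_eq']
  have final3 : (∑ p : V × V, ∑ q : V × V,
      (Dmat F Fd G α * Dmat F Fd G β) p q * (Gd ρ q.1 p.1 * Gd σ q.2 p.2))
        = ∑ γ, (G α * G β * Gd γ).trace *
            (∑ p : V × V, ∑ q : V × V, Dmat F Fd G γ p q * (Gd ρ q.1 p.1 * Gd σ q.2 p.2)) := by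
    rw [hDmul α β]
    simp only [Matrix.sum_apply, Matrix.smul_apply, smul_eq_mul]
    rw [sum_pull (c := fun γ => (G α * G β * Gd γ).trace) (f := fun γ p q => Dmat F Fd G γ p q)
      (g := fun p q => Gd ρ q.1 p.1 * Gd σ q.2 p.2)]
  have final2 : (∑ p : V × V, ∑ q : V × V,
      (Dmat F Fd G α * Dmat F Fd G β) p q * (Gd ρ q.1 p.1 * Gd σ q.2 p.2))
        = ∑ ρ₁, ∑ σ₁, ∑ ρ₂, ∑ σ₂, (F ρ₁ * F σ₁ * Fd α).trace * (F ρ₂ * F σ₂ * Fd β).trace *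
            (G ρ₁ * G ρ₂ * Gd ρ).trace * (G σ₁ * G σ₂ * Gd σ).trace := by
    simp only [Matrix.mul_apply, Dmat, Matrix.of_apply, Fintype.sum_prod_type]
    rw [stepA_aux (tA := fun u v => (F u * F v * Fd α).trace)
      (tB := fun u v => (F u * F v * Fd β).trace) (Gm := fun u x y => G u x y)
      (P := fun q p => Gd ρ q p) (Q := fun q p => Gd σ q p)]
    simp only [← tr3]
  calc ∑ γ, (G α * G β * Gd γ).trace * (F ρ * F σ * Fd γ).trace
      = ∑ γ, (G α * G β * Gd γ).trace *
          (∑ p : V × V, ∑ q : V × V, Dmat F Fd G γ p q * (Gd ρ q.1 p.1 * Gd σ q.2 p.2)) := by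
        exact Finset.sum_congr rfl fun γ _ => by rw [final1 γ]
    _ = ∑ p : V × V, ∑ q : V × V,
          (Dmat F Fd G α * Dmat F Fd G β) p q * (Gd ρ q.1 p.1 * Gd σ q.2 p.2) := final3.symm
    _ = ∑ ρ₁, ∑ σ₁, ∑ ρ₂, ∑ σ₂, (F ρ₁ * F σ₁ * Fd α).trace * (F ρ₂ * F σ₂ * Fd β).trace *
          (G ρ₁ * G ρ₂ * Gd ρ).trace * (G σ₁ * G σ₂ * Gd σ).trace := final2
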